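/- Let I be a monomial ideal of k[x_1,...,x_n] of height 1. Then there exists a variable x_j and a monomial ideal I_1 such that I = x_j · I_1 and the integral closure satisfies Ī = x_j · (integral closure of I_1). -/

import Mathlib

open MvPolynomial

variable {k : Type} [Field k] {n : ℕ}

/-- An ideal of `k[x₁,…,xₙ]` is a *monomial ideal* if it is generated by monomials. -/
def IsMonomialIdeal (I : Ideal (MvPolynomial (Fin n) k)) : Prop :=
  ∃ G : Set (Fin n →₀ ℕ), I = Ideal.span ((fun A => (monomial A (1 : k))) '' G)

/-- The integral closure of an ideal `I`, as a set: all elements `f` satisfying an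
equation `f^r + a₁ f^{r-1} + ⋯ + a_r = 0` with `aᵢ ∈ Iⁱ`. -/
def intCl (I : Ideal (MvPolynomial (Fin n) k)) : Set (MvPolynomial (Fin n) k) :=
  {f | ∃ r : ℕ, 0 < r ∧ ∃ a : ℕ → MvPolynomial (Fin n) k,
    (∀ i, 1 ≤ i → i ≤ r → a i ∈ I ^ i) ∧
    f ^ r + ∑ i ∈ Finset.Icc 1 r, a i * f ^ (r - i) = 0}

/-- The exponent vectors of the minimal monomial generators of a set `T` of polynomials:
those `A` with `x^A ∈ T` minimal in the componentwise (divisibility) order. -/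
def minExps (T : Set (MvPolynomial (Fin n) k)) : Set (Fin n →₀ ℕ) :=
  {A | monomial A (1 : k) ∈ T ∧
    ∀ B : Fin n →₀ ℕ, monomial B (1 : k) ∈ T → B ≤ A → B = A}

/-- The height of an ideal: the infimum of the heights of the primes containing it. -/
noncomputable def idealHeight (I : Ideal (MvPolynomial (Fin n) k)) : ℕ∞ :=
  ⨅ p ∈ {q : PrimeSpectrum (MvPolynomial (Fin n) k) | I ≤ q.asIdeal}, Order.height p

lemma keycalc {R : Type*} [CommRing R] (x f : R) (r : ℕ) (b : ℕ → R) :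
    (x * f) ^ r + ∑ i ∈ Finset.Icc 1 r, (x ^ i * b i) * (x * f) ^ (r - i)
      = x ^ r * (f ^ r + ∑ i ∈ Finset.Icc 1 r, b i * f ^ (r - i)) := by
  rw [mul_add, mul_pow, Finset.mul_sum]
  congr 1
  refine Finset.sum_congr rfl fun i hi => ?_
  obtain ⟨h1, h2⟩ := Finset.mem_Icc.mp hi
  have hx : x ^ i * x ^ (r - i) = x ^ r := by
    rw [← pow_add, Nat.add_sub_cancel' h2]
  rw [mul_pow, ← hx]; ring

noncomputable def killX (j : Fin n) : MvPolynomial (Fin n) k →ₐ[k] MvPolynomial (Fin n) k :=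
  aeval (fun i => if i = j then 0 else X i)

lemma killX_fix {j : Fin n} {f : MvPolynomial (Fin n) k}
    (h : ∀ d ∈ f.support, d j = 0) : killX j f = f := by
  classical
  conv_lhs => rw [f.as_sum]
  rw [map_sum]
  conv_rhs => rw [f.as_sum]
  refine Finset.sum_congr rfl fun d hd => ?_
  rw [killX, aeval_monomial, monomial_eq]
  congr 1
  refine Finsupp.prod_congr fun i hi => ?_
  have : i ≠ j := fun hij => by
    have := h d hd; exact (Finsupp.mem_support_iff.mp hi) (hij ▸ this)
  simp [this]

lemma X_dvd_iff_killX {j : Fin n} {f : MvPolynomial (Fin n) k} :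
    X j ∣ f ↔ killX j f = 0 := by
  constructor
  · rintro ⟨g, rfl⟩
    rw [map_mul]
    simp [killX]
  · intro h
    rw [X_dvd_iff_modMonomial_eq_zero]
    have hfix : killX j (f.modMonomial (Finsupp.single j 1)) = f.modMonomial (Finsupp.single j 1) := by
      apply killX_fix
      intro d hd
      by_contra hdj
      have hle : Finsupp.single j 1 ≤ d := by
        rw [Finsupp.single_le_iff]; omega
      have := coeff_modMonomial_of_le f hle
      exact Finsupp.mem_support_iff.mp hd this
    have heq : f = X j * (f.divMonomial (Finsupp.single j 1)) + f.modMonomial (Finsupp.single j 1) := by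
      exact (f.divMonomial_add_modMonomial_single j).symm
    have : killX j f = killX j (f.modMonomial (Finsupp.single j 1)) := by
      conv_lhs => rw [heq]
      rw [map_add, map_mul]
      simp [killX]
    rw [← hfix, ← this, h]

lemma prime_Xj (j : Fin n) : Prime (X j : MvPolynomial (Fin n) k) := by
  refine ⟨X_ne_zero j, ?_, ?_⟩
  · intro hu
    obtain ⟨g, hg⟩ := hu.exists_right_inv
    have := congrArg (killX j) hg
    rw [map_mul, map_one] at this
    simp [killX] at this
  · intro a b hab
    rw [X_dvd_iff_killX, map_mul, mul_eq_zero] at hab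
    rcases hab with h | h
    · exact Or.inl (X_dvd_iff_killX.mpr h)
    · exact Or.inr (X_dvd_iff_killX.mpr h)

lemma intCl_factor (j : Fin n) (I I₁ : Ideal (MvPolynomial (Fin n) k))
    (hfactor : I = Ideal.span {X j} * I₁) :
    intCl I = (fun f => X j * f) '' intCl I₁ := by
  have hXprime : (Ideal.span {X j} : Ideal (MvPolynomial (Fin n) k)).IsPrime :=
    (Ideal.span_singleton_prime (X_ne_zero j)).mpr (prime_Xj j)
  have hpow : ∀ i : ℕ, I ^ i = Ideal.span {X j ^ i} * I₁ ^ i := by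
    intro i
    rw [hfactor, mul_pow, Ideal.span_singleton_pow]
  ext g
  constructor
  · rintro ⟨r, hr, a, ha, heq⟩
    -- get b i with a i = X j ^ i * b i
    have hex : ∀ i, 1 ≤ i → i ≤ r → ∃ z ∈ I₁ ^ i, X j ^ i * z = a i := by
      intro i h1 h2
      exact Ideal.mem_span_singleton_mul.mp (hpow i ▸ ha i h1 h2)
    classical
    set b : ℕ → MvPolynomial (Fin n) k :=
      fun i => if h : ∃ z ∈ I₁ ^ i, X j ^ i * z = a i then h.choose else 0 with hb_def
    have hb : ∀ i, 1 ≤ i → i ≤ r → b i ∈ I₁ ^ i ∧ X j ^ i * b i = a i := by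
      intro i h1 h2
      have h := hex i h1 h2
      simp only [hb_def, dif_pos h]
      exact ⟨h.choose_spec.1, h.choose_spec.2⟩
    -- X j divides g
    have hgr : g ^ r ∈ Ideal.span {X j} := by
      have hmem : ∀ i ∈ Finset.Icc 1 r, a i * g ^ (r - i) ∈ Ideal.span {X j} := by
        intro i hi
        obtain ⟨h1, h2⟩ := Finset.mem_Icc.mp hi
        have hai : a i ∈ I := Ideal.pow_le_self (by omega) (ha i h1 h2)
        have : a i ∈ Ideal.span {X j} := by
          rw [hfactor] at hai
          exact Ideal.mul_le_left hai
        exact Ideal.mul_mem_right _ _ this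
      have : g ^ r = -∑ i ∈ Finset.Icc 1 r, a i * g ^ (r - i) :=
        eq_neg_of_add_eq_zero_left heq
      rw [this]
      exact neg_mem (Ideal.sum_mem _ hmem)
    have hg : X j ∣ g := Ideal.mem_span_singleton.mp (hXprime.mem_of_pow_mem r hgr)
    obtain ⟨f, hf⟩ := hg
    refine ⟨f, ⟨r, hr, b, fun i h1 h2 => (hb i h1 h2).1, ?_⟩, hf.symm⟩
    have hsum : g ^ r + ∑ i ∈ Finset.Icc 1 r, (X j ^ i * b i) * g ^ (r - i) = 0 := by
      rw [← heq]
      congr 1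
      refine Finset.sum_congr rfl fun i hi => ?_
      obtain ⟨h1, h2⟩ := Finset.mem_Icc.mp hi
      rw [(hb i h1 h2).2]
    rw [hf, keycalc] at hsum
    rcases mul_eq_zero.mp hsum with h | h
    · exact absurd h (pow_ne_zero r (X_ne_zero j))
    · exact h
  · rintro ⟨f, ⟨r, hr, b, hb, heq⟩, rfl⟩
    refine ⟨r, hr, fun i => X j ^ i * b i, ?_, ?_⟩
    · intro i h1 h2
      rw [hpow i]
      exact Ideal.mem_span_singleton_mul.mpr ⟨b i, hb i h1 h2, rfl⟩
    · rw [keycalc, heq, mul_zero]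

/-- A monomial ideal of height `1` factors as `I = x_j · I₁` for some
variable `x_j` and monomial ideal `I₁`, and the integral closure satisfies
`Ī = x_j · (integral closure of I₁)`. -/
theorem height_one_factor (I : Ideal (MvPolynomial (Fin n) k))
    (hI : IsMonomialIdeal I) (hne : I ≠ ⊥) (hht : idealHeight I = 1) :
    ∃ j : Fin n, ∃ I₁ : Ideal (MvPolynomial (Fin n) k), IsMonomialIdeal I₁ ∧
      I = Ideal.span {X j} * I₁ ∧
      intCl I = (fun f => X j * f) '' intCl I₁ := by
  
  classical
  obtain ⟨G, hG⟩ := hI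
  -- a prime of height ≤ 1 containing I
  obtain ⟨p, hIp, hp1⟩ : ∃ p : PrimeSpectrum (MvPolynomial (Fin n) k),
      I ≤ p.asIdeal ∧ Order.height p ≤ 1 := by
    by_contra h
    push_neg at h
    have h2 : (2 : ℕ∞) ≤ idealHeight I := by
      refine le_iInf₂ fun p hp => ?_
      have := h p hp
      exact (ENat.add_one_le_iff (by simp)).mpr this
    rw [hht] at h2
    norm_num at h2
  -- find a variable in p
  obtain ⟨A, hA⟩ : ∃ A, A ∈ G := by
    by_contra h
    push_neg at h
    have : G = ∅ := Set.eq_empty_iff_forall_notMem.mpr h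
    rw [this] at hG
    rw [Set.image_empty, Ideal.span_empty] at hG
    exact hne hG
  have hmonI : ∀ B ∈ G, monomial B (1 : k) ∈ I := by
    intro B hB
    rw [hG]
    exact Ideal.subset_span ⟨B, hB, rfl⟩
  have hAp : monomial A (1 : k) ∈ p.asIdeal := hIp (hmonI A hA)
  have hA0 : A ≠ 0 := by
    rintro rfl
    rw [monomial_zero'] at hAp
    simp at hAp
    exact p.2.ne_top (p.asIdeal.eq_top_of_isUnit_mem hAp isUnit_one)
  have hprod : monomial A (1 : k) = ∏ i ∈ A.support, X i ^ A i := by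
    rw [monomial_eq, C_1, one_mul]; rfl
  obtain ⟨j, hjA, hXjp⟩ : ∃ j ∈ A.support, (X j : MvPolynomial (Fin n) k) ^ A j ∈ p.asIdeal := by
    rw [hprod] at hAp
    exact (Ideal.IsPrime.prod_mem_iff (hp := p.2)).mp hAp
  have hXj : (X j : MvPolynomial (Fin n) k) ∈ p.asIdeal := p.2.mem_of_pow_mem _ hXjp
  have hXprime : (Ideal.span {X j} : Ideal (MvPolynomial (Fin n) k)).IsPrime :=
    (Ideal.span_singleton_prime (X_ne_zero j)).mpr (prime_Xj j)
  -- p = span {X j}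
  have hspan_le : Ideal.span {X j} ≤ p.asIdeal := by
    rw [Ideal.span_le, Set.singleton_subset_iff]; exact hXj
  have hpeq : p.asIdeal = Ideal.span {X j} := by
    rcases eq_or_lt_of_le hspan_le with h | h
    · exact h.symm
    · exfalso
      set q1 : PrimeSpectrum (MvPolynomial (Fin n) k) := ⟨Ideal.span {X j}, hXprime⟩
      set q0 : PrimeSpectrum (MvPolynomial (Fin n) k) := ⟨⊥, Ideal.bot_prime⟩
      have hq1p : q1 < p := (PrimeSpectrum.asIdeal_lt_asIdeal q1 p).mp h
      have hq01 : q0 < q1 := by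
        rw [← PrimeSpectrum.asIdeal_lt_asIdeal]
        simp only [q0, q1]
        rw [bot_lt_iff_ne_bot, Ne, Ideal.span_singleton_eq_bot]
        exact X_ne_zero j
      have := Order.height_le_coe_iff.mp (by exact_mod_cast hp1) q1 hq1p
      rw [Nat.cast_one, ENat.lt_one_iff_eq_zero, Order.height_eq_zero] at this
      exact (show IsMin q1 from this).not_lt hq01
  have hIle : I ≤ Ideal.span {X j} := hpeq ▸ hIp
  -- every generator is divisible by X j
  have hAj : ∀ B ∈ G, 1 ≤ B j := by
    intro B hB
    have := Ideal.mem_span_singleton.mp (hIle (hmonI B hB))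
    rcases X_dvd_monomial.mp this with h | h
    · exact absurd h one_ne_zero
    · omega
  -- the factor ideal
  set G₁ : Set (Fin n →₀ ℕ) := (fun A => A - Finsupp.single j 1) '' G with hG₁
  set I₁ : Ideal (MvPolynomial (Fin n) k) :=
    Ideal.span ((fun A => (monomial A (1 : k))) '' G₁) with hI₁
  have hpoint : ∀ B ∈ G, X j * monomial (B - Finsupp.single j 1) (1 : k) = monomial B 1 := by
    intro B hB
    rw [X, monomial_mul, one_mul, add_tsub_cancel_of_le]
    rw [Finsupp.single_le_iff]
    exact hAj B hB
  have hfactor : I = Ideal.span {X j} * I₁ := by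
    rw [hI₁, Ideal.span_mul_span', Set.singleton_mul, hG₁, Set.image_image, Set.image_image, hG]
    congr 1
    exact Set.image_congr fun B hB => (hpoint B hB).symm
  exact ⟨j, I₁, ⟨G₁, rfl⟩, hfactor, intCl_factor j I I₁ hfactor⟩
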